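/- Let f : ℝ → ℝ and x₀ ∈ ℝ. Suppose there exist vectors v, w ∈ ℝ × ℝ and a scalar c ∈ ℝ with w = c • v such that the unit secant vectors x ↦ ‖(x − x₀, f(x) − f(x₀))‖⁻¹ • (x − x₀, f(x) − f(x₀)) tend to v along 𝓝[>] x₀ and tend to w along 𝓝[<] x₀. Then either there exists L ∈ ℝ such that the difference quotient x ↦ (f(x) − f(x₀))/(x − x₀) tends to L along 𝓝[≠] x₀, or else the difference quotient tends to +∞ or to −∞ along 𝓝[>] x₀ and also tends to +∞ or to −∞ along 𝓝[<] x₀. -/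

import Mathlib

open Filter Topology

/-- The plane `ℝ × ℝ` equipped with the Euclidean norm. -/
noncomputable abbrev EuclideanPlane := WithLp 2 (ℝ × ℝ)

/-- A point of the Euclidean plane with the given coordinates. -/
noncomputable def planePt (x y : ℝ) : EuclideanPlane := (WithLp.equiv 2 (ℝ × ℝ)).symm (x, y)

theorem extended_derivative_of_graph_tangent (f : ℝ → ℝ) (x₀ : ℝ)
    (v w : EuclideanPlane) (c : ℝ) (hw : w = c • v)
    (hright : Tendsto
      (fun x => ‖planePt (x - x₀) (f x - f x₀)‖⁻¹ • planePt (x - x₀) (f x - f x₀))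
      (𝓝[>] x₀) (𝓝 v))
    (hleft : Tendsto
      (fun x => ‖planePt (x - x₀) (f x - f x₀)‖⁻¹ • planePt (x - x₀) (f x - f x₀))
      (𝓝[<] x₀) (𝓝 w)) :
    (∃ L : ℝ, Tendsto (fun x => (f x - f x₀) / (x - x₀)) (𝓝[≠] x₀) (𝓝 L)) ∨
    ((Tendsto (fun x => (f x - f x₀) / (x - x₀)) (𝓝[>] x₀) atTop ∨
      Tendsto (fun x => (f x - f x₀) / (x - x₀)) (𝓝[>] x₀) atBot) ∧
     (Tendsto (fun x => (f x - f x₀) / (x - x₀)) (𝓝[<] x₀) atTop ∨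
      Tendsto (fun x => (f x - f x₀) / (x - x₀)) (𝓝[<] x₀) atBot)) := by
  set π₁ : EuclideanPlane → ℝ := fun p => ((WithLp.equiv 2 (ℝ × ℝ)) p).1 with hπ₁
  set π₂ : EuclideanPlane → ℝ := fun p => ((WithLp.equiv 2 (ℝ × ℝ)) p).2 with hπ₂
  have cπ₁ : Continuous π₁ :=
    continuous_fst.comp (WithLp.prodContinuousLinearEquiv 2 ℝ ℝ ℝ).continuous
  have cπ₂ : Continuous π₂ :=
    continuous_snd.comp (WithLp.prodContinuousLinearEquiv 2 ℝ ℝ ℝ).continuous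
  set u : ℝ → EuclideanPlane :=
    fun x => ‖planePt (x - x₀) (f x - f x₀)‖⁻¹ • planePt (x - x₀) (f x - f x₀) with hu
  -- nonvanishing of the secant vector
  have hne : ∀ x : ℝ, x ≠ x₀ → planePt (x - x₀) (f x - f x₀) ≠ 0 := by
    intro x hx h
    apply hx
    have h2 : x - x₀ = (0:ℝ) := congrArg π₁ h
    exact sub_eq_zero.mp h2
  have hNpos : ∀ x : ℝ, x ≠ x₀ → 0 < ‖planePt (x - x₀) (f x - f x₀)‖ := fun x hx =>
    norm_pos_iff.mpr (hne x hx)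
  -- components of u
  have hu1 : ∀ x, π₁ (u x) = ‖planePt (x - x₀) (f x - f x₀)‖⁻¹ * (x - x₀) := fun x => rfl
  have hu2 : ∀ x, π₂ (u x) = ‖planePt (x - x₀) (f x - f x₀)‖⁻¹ * (f x - f x₀) := fun x => rfl
  -- slope in terms of components
  have hslope : ∀ x : ℝ, x ≠ x₀ → (f x - f x₀) / (x - x₀) = π₂ (u x) / π₁ (u x) := by
    intro x hx
    rw [hu1, hu2, mul_div_mul_left _ _ (inv_ne_zero (hNpos x hx).ne')]
  -- component limits
  have h1r : Tendsto (fun x => π₁ (u x)) (𝓝[>] x₀) (𝓝 (π₁ v)) := (cπ₁.tendsto v).comp hright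
  have h2r : Tendsto (fun x => π₂ (u x)) (𝓝[>] x₀) (𝓝 (π₂ v)) := (cπ₂.tendsto v).comp hright
  have h1l : Tendsto (fun x => π₁ (u x)) (𝓝[<] x₀) (𝓝 (π₁ w)) := (cπ₁.tendsto w).comp hleft
  have h2l : Tendsto (fun x => π₂ (u x)) (𝓝[<] x₀) (𝓝 (π₂ w)) := (cπ₂.tendsto w).comp hleft
  -- norms
  have hnv : ‖v‖ = 1 := by
    have : Tendsto (fun x => ‖u x‖) (𝓝[>] x₀) (𝓝 ‖v‖) := hright.norm
    have h1 : Tendsto (fun _ : ℝ => (1 : ℝ)) (𝓝[>] x₀) (𝓝 ‖v‖) := by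
      apply this.congr'
      filter_upwards [self_mem_nhdsWithin] with x hx
      have hp := hNpos x (ne_of_gt hx)
      simp [u, norm_smul, abs_of_pos (inv_pos.mpr hp), inv_mul_cancel₀ hp.ne']
    exact tendsto_nhds_unique h1 tendsto_const_nhds
  have hnw : ‖w‖ = 1 := by
    have : Tendsto (fun x => ‖u x‖) (𝓝[<] x₀) (𝓝 ‖w‖) := hleft.norm
    have h1 : Tendsto (fun _ : ℝ => (1 : ℝ)) (𝓝[<] x₀) (𝓝 ‖w‖) := by
      apply this.congr'
      filter_upwards [self_mem_nhdsWithin] with x hx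
      have hp := hNpos x (ne_of_lt hx)
      simp [u, norm_smul, abs_of_pos (inv_pos.mpr hp), inv_mul_cancel₀ hp.ne']
    exact tendsto_nhds_unique h1 tendsto_const_nhds
  have habsc : |c| = 1 := by
    have : ‖w‖ = |c| * ‖v‖ := by rw [hw, norm_smul]; rfl
    rw [hnv, hnw, mul_one] at this
    exact this.symm
  -- sign of first components
  have hv1nn : 0 ≤ π₁ v := by
    refine ge_of_tendsto h1r ?_
    filter_upwards [self_mem_nhdsWithin] with x hx
    rw [hu1]
    exact mul_nonneg (inv_nonneg.mpr (norm_nonneg _)) (by linarith [hx.out])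
  have hw1np : π₁ w ≤ 0 := by
    refine le_of_tendsto h1l ?_
    filter_upwards [self_mem_nhdsWithin] with x hx
    rw [hu1]
    exact mul_nonpos_of_nonneg_of_nonpos (inv_nonneg.mpr (norm_nonneg _))
      (by linarith [hx.out])
  have hw1 : π₁ w = c * π₁ v := by rw [hw]; rfl
  have hw2 : π₂ w = c * π₂ v := by rw [hw]; rfl
  rcases eq_or_lt_of_le hv1nn with h0 | hpos
  · -- vertical tangent: v₁ = 0
    right
    have hv2 : π₂ v ≠ 0 := by
      intro h
      have hv0 : v = 0 := by
        apply (WithLp.equiv 2 (ℝ × ℝ)).injective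
        exact Prod.ext h0.symm h
      rw [hv0, norm_zero] at hnv; norm_num at hnv
    have hw2ne : π₂ w ≠ 0 := by
      rw [hw2]
      exact mul_ne_zero (by intro h; rw [h, abs_zero] at habsc; norm_num at habsc) hv2
    constructor
    · -- right side
      have hpos' : ∀ᶠ x in 𝓝[>] x₀, 0 < π₁ (u x) := by
        filter_upwards [self_mem_nhdsWithin] with x hx
        rw [hu1]
        exact mul_pos (inv_pos.mpr (hNpos x (ne_of_gt hx))) (by linarith [hx.out])
      have hto0 : Tendsto (fun x => π₁ (u x)) (𝓝[>] x₀) (𝓝[>] 0) := by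
        rw [tendsto_nhdsWithin_iff]
        exact ⟨h0 ▸ h1r, hpos'⟩
      have hinv : Tendsto (fun x => (π₁ (u x))⁻¹) (𝓝[>] x₀) atTop := hto0.inv_tendsto_nhdsGT_zero
      have key : ∀ (t : Filter ℝ),
          Tendsto (fun x => π₂ (u x) * (π₁ (u x))⁻¹) (𝓝[>] x₀) t →
          Tendsto (fun x => (f x - f x₀) / (x - x₀)) (𝓝[>] x₀) t := by
        intro t ht
        apply ht.congr'
        filter_upwards [self_mem_nhdsWithin] with x hx
        rw [hslope x (ne_of_gt hx), div_eq_mul_inv]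
      rcases hv2.lt_or_gt with hneg | hpos2
      · exact Or.inr (key _ (h2r.neg_mul_atTop hneg hinv))
      · exact Or.inl (key _ (h2r.pos_mul_atTop hpos2 hinv))
    · -- left side
      have hneg' : ∀ᶠ x in 𝓝[<] x₀, 0 < -π₁ (u x) := by
        filter_upwards [self_mem_nhdsWithin] with x hx
        rw [hu1]
        have : (x - x₀) < 0 := by linarith [hx.out]
        nlinarith [inv_pos.mpr (hNpos x (ne_of_lt hx))]
      have hw10 : π₁ w = 0 := by rw [hw1, ← h0, mul_zero]
      have hto0 : Tendsto (fun x => -π₁ (u x)) (𝓝[<] x₀) (𝓝[>] 0) := by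
        rw [tendsto_nhdsWithin_iff]
        constructor
        · have := h1l.neg
          rw [hw10, neg_zero] at this
          exact this
        · exact hneg'
      have hinv : Tendsto (fun x => (-π₁ (u x))⁻¹) (𝓝[<] x₀) atTop := hto0.inv_tendsto_nhdsGT_zero
      have key : ∀ (t : Filter ℝ),
          Tendsto (fun x => -π₂ (u x) * (-π₁ (u x))⁻¹) (𝓝[<] x₀) t →
          Tendsto (fun x => (f x - f x₀) / (x - x₀)) (𝓝[<] x₀) t := by
        intro t ht
        apply ht.congr'
        filter_upwards [self_mem_nhdsWithin] with x hx
        rw [hslope x (ne_of_lt hx), div_eq_mul_inv, inv_neg, mul_neg, neg_mul, neg_neg]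
      rcases hw2ne.lt_or_gt with hneg2 | hpos2
      · have : Tendsto (fun x => -π₂ (u x)) (𝓝[<] x₀) (𝓝 (-π₂ w)) := h2l.neg
        exact Or.inl (key _ (this.pos_mul_atTop (by linarith) hinv))
      · have : Tendsto (fun x => -π₂ (u x)) (𝓝[<] x₀) (𝓝 (-π₂ w)) := h2l.neg
        exact Or.inr (key _ (this.neg_mul_atTop (by linarith) hinv))
  · -- finite slope: v₁ > 0
    left
    have hc : c = -1 := by
      have hcle : c ≤ 0 := by
        by_contra h
        push_neg at h
        have : 0 < π₁ w := by rw [hw1]; positivity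
        linarith
      rcases abs_eq (by norm_num : (0:ℝ) ≤ 1) |>.mp habsc with h | h
      · linarith
      · exact h
    refine ⟨π₂ v / π₁ v, ?_⟩
    rw [← nhdsLT_sup_nhdsGT, tendsto_sup]
    constructor
    · -- left
      have hlim : Tendsto (fun x => π₂ (u x) / π₁ (u x)) (𝓝[<] x₀) (𝓝 (π₂ w / π₁ w)) :=
        h2l.div h1l (by rw [hw1, hc]; simpa using hpos.ne')
      have heq : π₂ w / π₁ w = π₂ v / π₁ v := by
        rw [hw1, hw2, hc]; ring_nf
      rw [heq] at hlim
      apply hlim.congr'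
      filter_upwards [self_mem_nhdsWithin] with x hx
      exact (hslope x (ne_of_lt hx)).symm
    · -- right
      have hlim : Tendsto (fun x => π₂ (u x) / π₁ (u x)) (𝓝[>] x₀) (𝓝 (π₂ v / π₁ v)) :=
        h2r.div h1r hpos.ne'
      apply hlim.congr'
      filter_upwards [self_mem_nhdsWithin] with x hx
      exact (hslope x (ne_of_gt hx)).symm
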